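/- arXiv:1912.08419 — 5 statements merged into one kernel-verified Lean document; each statement's English description precedes it below -/
import Mathlib

section
/- The chain recurrent set CR(f) of a continuous endomorphism f of a compact abelian topological group G is a subgroup of G. -/
open Pointwise


/-- `EChainFrom f E x y` : there is an `E`-chain of length `n ≥ 1` from `x` to `y`. -/
def EChainFrom {G : Type*} [Group G] (f : G → G) (E : Set G) (x y : G) : Prop :=
  ∃ n : ℕ, 1 ≤ n ∧ ∃ c : ℕ → G, c 0 = x ∧ c n = y ∧
    ∀ i < n, f (c i) * (c (i + 1))⁻¹ ∈ E

/-- `x ⇝ y` : for every neighborhood `E` of the identity there is an `E`-chain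
from `x` to `y`. -/
def ChainTo {G : Type*} [Group G] [TopologicalSpace G] (f : G → G) (x y : G) : Prop :=
  ∀ E ∈ nhds (1 : G), EChainFrom f E x y

/-- The chain recurrent set of `f`. -/
def chainRecurrentSet {G : Type*} [Group G] [TopologicalSpace G] (f : G → G) : Set G :=
  {x : G | ChainTo f x x}

/-- Repeat a closed `E`-chain `k` times to get one of length `n * k`. -/
lemma echain_repeat {G : Type*} [Group G] (f : G → G) (E : Set G) (x : G) (n : ℕ)
    (hn : 1 ≤ n) (c : ℕ → G) (hc0 : c 0 = x) (hcn : c n = x)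
    (hstep : ∀ i < n, f (c i) * (c (i + 1))⁻¹ ∈ E) (k : ℕ) :
    ∃ c' : ℕ → G, c' 0 = x ∧ c' (n * k) = x ∧ ∀ i < n * k, f (c' i) * (c' (i + 1))⁻¹ ∈ E := by
  refine ⟨fun i => c (i % n), by simp [hc0], by simp [hc0], ?_⟩
  intro i _
  have hlt : i % n < n := Nat.mod_lt _ hn
  have key : c ((i + 1) % n) = c (i % n + 1) := by
    rw [← Nat.mod_add_mod]
    rcases Nat.lt_or_ge (i % n + 1) n with h | h
    · rw [Nat.mod_eq_of_lt h]
    · have heq : i % n + 1 = n := by omega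
      rw [heq, Nat.mod_self, hc0, hcn]
  simp only []
  rw [key]
  exact hstep _ hlt

/-- The chain recurrent set of a continuous endomorphism of a compact abelian
topological group is a subgroup. -/
theorem chainRecurrentSet_is_subgroup {G : Type*} [CommGroup G] [TopologicalSpace G]
    [IsTopologicalGroup G] [CompactSpace G] (f : G →* G) (hf : Continuous f) :
    ∃ H : Subgroup G, (H : Set G) = chainRecurrentSet ⇑f := by
  refine ⟨{ carrier := chainRecurrentSet ⇑f, one_mem' := ?_, mul_mem' := ?_, inv_mem' := ?_ }, rfl⟩
  case refine_2 =>
    intro E hE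
    exact ⟨1, le_refl _, fun _ => 1, rfl, rfl, fun i _ => by
      simpa using mem_of_mem_nhds hE⟩
  · -- mul
    rintro x y hx hy E hE
    obtain ⟨V, hV, hVE⟩ : ∃ V ∈ nhds (1 : G), V * V ⊆ E := by
      obtain ⟨V, hVo, hV1, hVE⟩ := exists_open_nhds_one_mul_subset hE
      exact ⟨V, hVo.mem_nhds hV1, hVE⟩
    obtain ⟨n, hn, c, hc0, hcn, hc⟩ := hx V hV
    obtain ⟨m, hm, d, hd0, hdm, hd⟩ := hy V hV
    obtain ⟨c', hc'0, hc'N, hc'⟩ := echain_repeat f V x n hn c hc0 hcn hc m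
    obtain ⟨d', hd'0, hd'N, hd'⟩ := echain_repeat f V y m hm d hd0 hdm hd n
    rw [mul_comm m n] at hd'N
    refine ⟨n * m, Nat.one_le_iff_ne_zero.mpr (by positivity), fun i => c' i * d' i,
      by simp [hc'0, hd'0], by simp [hc'N, hd'N], fun i hi => ?_⟩
    have h1 := hc' i hi
    have h2 := hd' i (by rwa [mul_comm])
    have : f (c' i * d' i) * (c' (i + 1) * d' (i + 1))⁻¹ =
        (f (c' i) * (c' (i + 1))⁻¹) * (f (d' i) * (d' (i + 1))⁻¹) := by
      rw [map_mul, mul_inv, mul_mul_mul_comm]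
    rw [this]
    exact hVE (Set.mul_mem_mul h1 h2)
  · -- inv
    intro x hx E hE
    obtain ⟨n, hn, c, hc0, hcn, hc⟩ := hx E⁻¹ (by simpa using inv_mem_nhds_one G hE)
    refine ⟨n, hn, fun i => (c i)⁻¹, by simp [hc0], by simp [hcn], fun i hi => ?_⟩
    have := hc i hi
    rw [Set.mem_inv] at this
    simpa [map_inv, mul_comm] using this
end

section
/- If x, y lie in the chain recurrent set of a continuous endomorphism f of a compact abelian topological group, then the product x·y lies in the chain recurrent set: given E-chains of lengths m and n from x to x and from y to y respectively, repeating them periodically up to length m·n yields, by pointwise multiplication, an E²-chain from x·y to itself. -/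
open Pointwise

/-- `EChainOfLength f E n x y c` : `c` is an `E`-chain of length `n` from `x` to `y`. -/
def EChainOfLength {G : Type*} [Group G] (f : G → G) (E : Set G) (n : ℕ) (x y : G)
    (c : ℕ → G) : Prop :=
  c 0 = x ∧ c n = y ∧ ∀ i < n, f (c i) * (c (i + 1))⁻¹ ∈ E

lemma periodic_step {G : Type*} [Group G] (f : G → G) (E : Set G) (m : ℕ) (hm : 1 ≤ m)
    (x : G) (a : ℕ → G) (ha : EChainOfLength f E m x x a) (i : ℕ) :
    f (a (i % m)) * (a ((i + 1) % m))⁻¹ ∈ E := by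
  obtain ⟨h0, hmx, hstep⟩ := ha
  have hmpos : 0 < m := hm
  have hr : i % m < m := Nat.mod_lt _ hmpos
  have h1 : (i + 1) % m = (i % m + 1) % m := (Nat.mod_add_mod i m 1).symm
  rcases Nat.lt_or_ge (i % m + 1) m with hlt | hge
  · have : (i + 1) % m = i % m + 1 := by rw [h1, Nat.mod_eq_of_lt hlt]
    rw [this]
    exact hstep _ hr
  · have he : i % m + 1 = m := by omega
    have h2 : (i + 1) % m = 0 := by rw [h1, he, Nat.mod_self]
    have h3 := hstep _ hr
    rw [he, hmx, ← h0] at h3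
    rwa [h2]

/-- Given an `E`-chain of length `m` from `x` to `x` and an `E`-chain of length `n`
from `y` to `y`, repeating them periodically and multiplying pointwise yields an
`E·E`-chain of length `m·n` from `x·y` to itself. -/
theorem mul_mem_chainRecurrent_chains {G : Type*} [CommGroup G] [TopologicalSpace G]
    [IsTopologicalGroup G] [CompactSpace G] (f : G →* G) (hf : Continuous f)
    (E : Set G) (hE : E ∈ nhds (1 : G)) (m n : ℕ) (hm : 1 ≤ m) (hn : 1 ≤ n)
    (x y : G) (a b : ℕ → G)
    (ha : EChainOfLength ⇑f E m x x a) (hb : EChainOfLength ⇑f E n y y b) :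
    ∃ c : ℕ → G, EChainOfLength ⇑f (E * E) (m * n) (x * y) (x * y) c := by
  refine ⟨fun i => a (i % m) * b (i % n), ?_, ?_, ?_⟩
  · simp [Nat.zero_mod, ha.1, hb.1]
  · show a (m * n % m) * b (m * n % n) = x * y
    rw [Nat.mul_mod_right, Nat.mul_mod_left, ha.1, hb.1]
  · intro i _
    have hA := periodic_step (⇑f) E m hm x a ha i
    have hB := periodic_step (⇑f) E n hn y b hb i
    have : f (a (i % m) * b (i % n)) * (a ((i + 1) % m) * b ((i + 1) % n))⁻¹ =
        (f (a (i % m)) * (a ((i + 1) % m))⁻¹) * (f (b (i % n)) * (b ((i + 1) % n))⁻¹) := by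
      rw [map_mul, mul_inv, mul_mul_mul_comm]
    rw [this]
    exact Set.mul_mem_mul hA hB
end

section
/- The chain component of the identity, CC(f) = {x ∈ G : x ⇝ e and e ⇝ x}, of a continuous endomorphism f of a compact abelian topological group G is a subgroup of G. -/
/-- The chain component of the identity. -/
def chainComponentOne {G : Type*} [Group G] [TopologicalSpace G] (f : G → G) : Set G :=
  {x : G | ChainTo f x 1 ∧ ChainTo f 1 x}

section Aux

variable {G : Type*} [CommGroup G] [TopologicalSpace G] [IsTopologicalGroup G] (f : G →* G)

/-- A chain ending at `1` can be padded at the end to any longer length. -/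
lemma echain_pad_end {E : Set G} (hE : (1 : G) ∈ E) {x : G} {n : ℕ}
    (c : ℕ → G) (hc0 : c 0 = x) (hcn : c n = 1)
    (hstep : ∀ i < n, f (c i) * (c (i + 1))⁻¹ ∈ E) (m : ℕ) (hm : n ≤ m) :
    ∃ c' : ℕ → G, c' 0 = x ∧ c' m = 1 ∧ ∀ i < m, f (c' i) * (c' (i + 1))⁻¹ ∈ E := by
  refine ⟨fun i => c (min i n), by simpa using hc0, by simp [Nat.min_eq_right hm, hcn], ?_⟩
  intro i hi
  show f (c (min i n)) * (c (min (i + 1) n))⁻¹ ∈ E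
  rcases lt_or_ge i n with h | h
  · rw [Nat.min_eq_left h.le, Nat.min_eq_left h]
    exact hstep i h
  · rw [Nat.min_eq_right h, Nat.min_eq_right (le_trans h (Nat.le_succ i)), hcn]
    simpa using hE

/-- A chain starting at `1` can be padded at the front to any longer length. -/
lemma echain_pad_front {E : Set G} (hE : (1 : G) ∈ E) {y : G} {n : ℕ}
    (c : ℕ → G) (hc0 : c 0 = 1) (hcn : c n = y)
    (hstep : ∀ i < n, f (c i) * (c (i + 1))⁻¹ ∈ E) (m : ℕ) (hm : n ≤ m) :
    ∃ c' : ℕ → G, c' 0 = 1 ∧ c' m = y ∧ ∀ i < m, f (c' i) * (c' (i + 1))⁻¹ ∈ E := by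
  refine ⟨fun i => c (i - (m - n)), by simpa using hc0, ?_, ?_⟩
  · show c (m - (m - n)) = y
    have h : m - (m - n) = n := by omega
    rw [h, hcn]
  · intro i hi
    show f (c (i - (m - n))) * (c (i + 1 - (m - n)))⁻¹ ∈ E
    rcases lt_or_ge i (m - n) with h | h
    · have h1 : i - (m - n) = 0 := Nat.sub_eq_zero_of_le h.le
      have h2 : i + 1 - (m - n) = 0 := Nat.sub_eq_zero_of_le h
      rw [h1, h2, hc0]
      simpa using hE
    · have h1 : i + 1 - (m - n) = (i - (m - n)) + 1 := by omega
      rw [h1]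
      apply hstep
      omega

lemma chainTo_one_one : ChainTo (⇑f) (1 : G) 1 := by
  intro E hE
  refine ⟨1, le_refl 1, fun _ => 1, rfl, rfl, fun i _ => ?_⟩
  simpa using mem_of_mem_nhds hE

lemma chainTo_inv {x a : G} (hx : ChainTo (⇑f) x a) : ChainTo (⇑f) x⁻¹ a⁻¹ := by
  intro E hE
  have hinv : (fun g : G => g⁻¹) ⁻¹' E ∈ nhds (1 : G) := by
    have := (continuous_inv.tendsto (1 : G))
    rw [inv_one] at this
    exact this hE
  obtain ⟨n, hn, c, hc0, hcn, hcs⟩ := hx _ hinv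
  refine ⟨n, hn, fun i => (c i)⁻¹, by simp [hc0], by simp [hcn], fun i hi => ?_⟩
  have := hcs i hi
  show f (c i)⁻¹ * ((c (i + 1))⁻¹)⁻¹ ∈ E
  have heq : f (c i)⁻¹ * ((c (i + 1))⁻¹)⁻¹ = (f (c i) * (c (i + 1))⁻¹)⁻¹ := by
    rw [map_inv]; simp [mul_inv, mul_comm]
  rw [heq]
  exact this

lemma chainTo_mul_to_one {x y : G} (hx : ChainTo (⇑f) x 1) (hy : ChainTo (⇑f) y 1) :
    ChainTo (⇑f) (x * y) 1 := by
  intro E hE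
  obtain ⟨V, hV, hVE⟩ := exists_nhds_one_split hE
  have h1V : (1 : G) ∈ V := mem_of_mem_nhds hV
  obtain ⟨n, hn, c, hc0, hcn, hcs⟩ := hx V hV
  obtain ⟨k, hk, d, hd0, hdk, hds⟩ := hy V hV
  obtain ⟨c', hc'0, hc'm, hc's⟩ :=
    echain_pad_end f h1V c hc0 hcn hcs (max n k) (le_max_left n k)
  obtain ⟨d', hd'0, hd'm, hd's⟩ :=
    echain_pad_end f h1V d hd0 hdk hds (max n k) (le_max_right n k)
  refine ⟨max n k, le_trans hn (le_max_left n k), fun i => c' i * d' i,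
    by show c' 0 * d' 0 = x * y; rw [hc'0, hd'0],
    by show c' (max n k) * d' (max n k) = 1; rw [hc'm, hd'm, mul_one], fun i hi => ?_⟩
  show f (c' i * d' i) * (c' (i + 1) * d' (i + 1))⁻¹ ∈ E
  have heq : f (c' i * d' i) * (c' (i + 1) * d' (i + 1))⁻¹ =
      (f (c' i) * (c' (i + 1))⁻¹) * (f (d' i) * (d' (i + 1))⁻¹) := by
    rw [map_mul, mul_inv, mul_mul_mul_comm]
  rw [heq]
  exact hVE _ (hc's i hi) _ (hd's i hi)

lemma chainTo_mul_from_one {x y : G} (hx : ChainTo (⇑f) 1 x) (hy : ChainTo (⇑f) 1 y) :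
    ChainTo (⇑f) 1 (x * y) := by
  intro E hE
  obtain ⟨V, hV, hVE⟩ := exists_nhds_one_split hE
  have h1V : (1 : G) ∈ V := mem_of_mem_nhds hV
  obtain ⟨n, hn, c, hc0, hcn, hcs⟩ := hx V hV
  obtain ⟨k, hk, d, hd0, hdk, hds⟩ := hy V hV
  obtain ⟨c', hc'0, hc'm, hc's⟩ :=
    echain_pad_front f h1V c hc0 hcn hcs (max n k) (le_max_left n k)
  obtain ⟨d', hd'0, hd'm, hd's⟩ :=
    echain_pad_front f h1V d hd0 hdk hds (max n k) (le_max_right n k)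
  refine ⟨max n k, le_trans hn (le_max_left n k), fun i => c' i * d' i,
    by show c' 0 * d' 0 = 1; rw [hc'0, hd'0, mul_one],
    by show c' (max n k) * d' (max n k) = x * y; rw [hc'm, hd'm], fun i hi => ?_⟩
  show f (c' i * d' i) * (c' (i + 1) * d' (i + 1))⁻¹ ∈ E
  have heq : f (c' i * d' i) * (c' (i + 1) * d' (i + 1))⁻¹ =
      (f (c' i) * (c' (i + 1))⁻¹) * (f (d' i) * (d' (i + 1))⁻¹) := by
    rw [map_mul, mul_inv, mul_mul_mul_comm]
  rw [heq]
  exact hVE _ (hc's i hi) _ (hd's i hi)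

end Aux

/-- The chain component of the identity of a continuous endomorphism of a compact
abelian topological group is a subgroup. -/
theorem chainComponentOne_is_subgroup {G : Type*} [CommGroup G] [TopologicalSpace G]
    [IsTopologicalGroup G] [CompactSpace G] (f : G →* G) (hf : Continuous f) :
    ∃ H : Subgroup G, (H : Set G) = chainComponentOne ⇑f := by
  refine ⟨{ carrier := chainComponentOne ⇑f
            one_mem' := ⟨chainTo_one_one f, chainTo_one_one f⟩
            mul_mem' := ?_
            inv_mem' := ?_ }, rfl⟩
  · rintro a b ⟨ha1, h1a⟩ ⟨hb1, h1b⟩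
    exact ⟨chainTo_mul_to_one f ha1 hb1, chainTo_mul_from_one f h1a h1b⟩
  · rintro a ⟨ha1, h1a⟩
    refine ⟨?_, ?_⟩
    · simpa using chainTo_inv f ha1
    · simpa using chainTo_inv f h1a
end

section
/- Let f be a continuous endomorphism of a compact abelian topological group G with the shadowing property, and let H be an f-invariant subgroup of G. Then for every neighborhood E of the identity there exists a neighborhood D of the identity such that every sequence (y_n) with f(y_n)·y_{n+1}⁻¹ ∈ D·H for all n admits a point y ∈ G with f^n(y)·y_n⁻¹ ∈ E·H for all n. -/
open Pointwise

/-- `f` has the shadowing property: for every neighborhood `E` of the identity there is a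
neighborhood `D` of the identity such that every `D`-pseudo-orbit is `E`-shadowed. -/
def HasShadowingProperty {G : Type*} [Group G] [TopologicalSpace G] (f : G → G) : Prop :=
  ∀ E ∈ nhds (1 : G), ∃ D ∈ nhds (1 : G),
    ∀ x : ℕ → G, (∀ k : ℕ, f (x k) * (x (k + 1))⁻¹ ∈ D) →
      ∃ y : G, ∀ k : ℕ, f^[k] y * (x k)⁻¹ ∈ E

/-- If `f` has the shadowing property and `H` is an `f`-invariant subgroup, then for
every neighborhood `E` of the identity there is a neighborhood `D` of the identity such
that every `D·H`-pseudo-orbit is `E·H`-shadowed by some point of `G`. -/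
theorem shadowing_mod_subgroup {G : Type*} [CommGroup G] [TopologicalSpace G]
    [IsTopologicalGroup G] [CompactSpace G] (f : G →* G) (hf : Continuous f)
    (hsh : HasShadowingProperty ⇑f) (H : Subgroup G) (hinv : ∀ x ∈ H, f x ∈ H) :
    ∀ E ∈ nhds (1 : G), ∃ D ∈ nhds (1 : G),
      ∀ y : ℕ → G, (∀ k : ℕ, f (y k) * (y (k + 1))⁻¹ ∈ D * (H : Set G)) →
        ∃ z : G, ∀ k : ℕ, (⇑f)^[k] z * (y k)⁻¹ ∈ E * (H : Set G) := by
  intro E hE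
  obtain ⟨D, hD, hsd⟩ := hsh E hE
  refine ⟨D, hD, ?_⟩
  intro y hy
  simp only [Set.mem_mul] at hy
  choose d hd h hh heq using hy
  -- corrected pseudo-orbit
  set x : ℕ → G := fun k => Nat.rec (y 0) (fun k xk => f xk * (d k)⁻¹) k with hx
  have hx0 : x 0 = y 0 := rfl
  have hxs : ∀ k, x (k + 1) = f (x k) * (d k)⁻¹ := fun k => rfl
  have hxy : ∀ k, x k * (y k)⁻¹ ∈ H := by
    intro k
    induction k with
    | zero => simp only [hx0]; simpa using H.one_mem
    | succ k ih =>
      have : x (k + 1) * (y (k + 1))⁻¹ = f (x k * (y k)⁻¹) * h k := by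
        rw [hxs k, map_mul, map_inv]
        have := heq k
        have hdk : (d k)⁻¹ = h k * (f (y k))⁻¹ * y (k + 1) := by
          have : d k = f (y k) * (y (k + 1))⁻¹ * (h k)⁻¹ := by
            rw [← this]; group
          rw [this]; group; exact mul_right_comm _ _ _
        rw [hdk]
        group
        exact mul_right_comm _ _ _
      rw [this]
      exact H.mul_mem (hinv _ ih) (hh k)
  have hpo : ∀ k, f (x k) * (x (k + 1))⁻¹ ∈ D := by
    intro k
    rw [hxs k]
    simpa using hd k
  obtain ⟨z, hz⟩ := hsd x hpo
  refine ⟨z, fun k => ?_⟩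
  have : (⇑f)^[k] z * (y k)⁻¹ = ((⇑f)^[k] z * (x k)⁻¹) * (x k * (y k)⁻¹) := by group
  rw [this]
  exact Set.mul_mem_mul (hz k) (hxy k)
end

section
/- Let f be a continuous endomorphism of a compact abelian topological group G with the shadowing property and H a closed f-invariant subgroup. Then the induced map f̃ : G/H → G/H, f̃(xH) = f(x)H, has the shadowing property with respect to the quotient uniformity. -/
/-- If a continuous endomorphism `f` of a compact abelian topological group has the
shadowing property and `H` is a closed `f`-invariant subgroup, then the induced map on
`G/H` has the shadowing property. -/
theorem quotient_shadowing {G : Type*} [CommGroup G] [TopologicalSpace G]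
    [IsTopologicalGroup G] [CompactSpace G] (f : G →* G) (hf : Continuous f)
    (hsh : HasShadowingProperty ⇑f) (H : Subgroup G) (hc : IsClosed (H : Set G))
    (hinv : H ≤ H.comap f) :
    HasShadowingProperty ⇑(QuotientGroup.map H H f hinv) := by
  intro E hE
  set π : G → G ⧸ H := QuotientGroup.mk with hπ
  set F := QuotientGroup.map H H f hinv with hF
  have hπcont : Continuous π := continuous_quot_mk
  have hπopen : IsOpenMap π := QuotientGroup.isOpenMap_coe
  -- E' = preimage of E
  have hE' : π ⁻¹' E ∈ nhds (1 : G) := by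
    have := hπcont.continuousAt (x := (1 : G)).preimage_mem_nhds (by simpa [hπ] using hE)
    simpa using this
  obtain ⟨D, hD, hDsh⟩ := hsh (π ⁻¹' E) hE'
  refine ⟨π '' D, hπopen.image_mem_nhds (by simpa using hD), ?_⟩
  intro xt hxt
  -- semiconjugacy
  have hcomm : ∀ g : G, F (π g) = π (f g) := fun g => rfl
  have hiter : ∀ (k : ℕ) (g : G), F^[k] (π g) = π (f^[k] g) := by
    intro k
    induction k with
    | zero => intro g; rfl
    | succ n ih =>
      intro g
      rw [Function.iterate_succ_apply, Function.iterate_succ_apply, hcomm, ih]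
  -- choose d k ∈ D with π (d k) = F (xt k) * (xt (k+1))⁻¹
  have hchoose : ∀ k : ℕ, ∃ d : G, d ∈ D ∧ π d = F (xt k) * (xt (k + 1))⁻¹ := by
    intro k
    obtain ⟨d, hd, hd2⟩ := hxt k
    exact ⟨d, hd, hd2⟩
  choose d hdD hdπ using hchoose
  -- lift xt 0
  obtain ⟨x0, hx0⟩ := Quotient.exists_rep (xt 0)
  -- build the lifted pseudo-orbit
  set x : ℕ → G := fun k => Nat.rec x0 (fun k xk => (d k)⁻¹ * f xk) k with hx
  have hxsucc : ∀ k, x (k + 1) = (d k)⁻¹ * f (x k) := fun k => rfl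
  have hproj : ∀ k, π (x k) = xt k := by
    intro k
    induction k with
    | zero => exact hx0
    | succ n ih =>
      rw [hxsucc]
      have : π ((d n)⁻¹ * f (x n)) = (π (d n))⁻¹ * π (f (x n)) := rfl
      rw [this, hdπ n, ← hcomm, ih]
      group
  have hpseudo : ∀ k, f (x k) * (x (k + 1))⁻¹ ∈ D := by
    intro k
    rw [hxsucc]
    simpa [mul_assoc] using hdD k
  obtain ⟨y, hy⟩ := hDsh x hpseudo
  refine ⟨π y, ?_⟩
  intro k
  have := hy k
  have h2 : π (f^[k] y * (x k)⁻¹) ∈ E := this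
  have h3 : π (f^[k] y * (x k)⁻¹) = F^[k] (π y) * (xt k)⁻¹ := by
    have : π (f^[k] y * (x k)⁻¹) = π (f^[k] y) * (π (x k))⁻¹ := rfl
    rw [this, hiter, hproj]
  rwa [h3] at h2
end
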